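/- The t-hull number of any prime graph with at least two vertices is exactly two. -/

import Mathlib

open Set

variable {V : Type*}

/-- `p` is a triangle path: a path with no edge joining vertices at index
distance greater than 2 along the path. -/
def TPath (G : SimpleGraph V) {u v : V} (p : G.Walk u v) : Prop :=
  p.IsPath ∧ ∀ i j : ℕ, i + 2 < j →
    ∀ (hi : i < p.support.length) (hj : j < p.support.length),
      ¬ G.Adj (p.support.get ⟨i, hi⟩) (p.support.get ⟨j, hj⟩)

/-- `p` is a monophonic (induced) path: a path with no edge joining vertices at
index distance greater than 1 along the path. -/
def MPath (G : SimpleGraph V) {u v : V} (p : G.Walk u v) : Prop :=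
  p.IsPath ∧ ∀ i j : ℕ, i + 1 < j →
    ∀ (hi : i < p.support.length) (hj : j < p.support.length),
      ¬ G.Adj (p.support.get ⟨i, hi⟩) (p.support.get ⟨j, hj⟩)

/-- `p` is a geodesic (shortest path). -/
def GPath (G : SimpleGraph V) {u v : V} (p : G.Walk u v) : Prop :=
  p.IsPath ∧ ∀ q : G.Walk u v, p.length ≤ q.length

/-- `S` is convex in the triangle path convexity. -/
def TConvex (G : SimpleGraph V) (S : Set V) : Prop :=
  ∀ ⦃u v : V⦄, u ∈ S → v ∈ S → ∀ p : G.Walk u v, TPath G p → ∀ w ∈ p.support, w ∈ S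

/-- `S` is convex in the monophonic convexity. -/
def MConvex (G : SimpleGraph V) (S : Set V) : Prop :=
  ∀ ⦃u v : V⦄, u ∈ S → v ∈ S → ∀ p : G.Walk u v, MPath G p → ∀ w ∈ p.support, w ∈ S

/-- `S` is convex in the geodetic convexity. -/
def GConvex (G : SimpleGraph V) (S : Set V) : Prop :=
  ∀ ⦃u v : V⦄, u ∈ S → v ∈ S → ∀ p : G.Walk u v, GPath G p → ∀ w ∈ p.support, w ∈ S

/-- `S` is `P₃`-convex: no vertex outside `S` has two neighbours in `S`. -/
def P3Convex (G : SimpleGraph V) (S : Set V) : Prop :=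
  ∀ w ∉ S, ∀ a ∈ S, ∀ b ∈ S, G.Adj w a → G.Adj w b → a = b

/-- The triangle path interval of `S`. -/
def TInterval (G : SimpleGraph V) (S : Set V) : Set V :=
  S ∪ {w | ∃ u ∈ S, ∃ v ∈ S, ∃ p : G.Walk u v, TPath G p ∧ w ∈ p.support}

/-- The monophonic interval of `S`. -/
def MInterval (G : SimpleGraph V) (S : Set V) : Set V :=
  S ∪ {w | ∃ u ∈ S, ∃ v ∈ S, ∃ p : G.Walk u v, MPath G p ∧ w ∈ p.support}

/-- The geodetic interval of `S`. -/
def GInterval (G : SimpleGraph V) (S : Set V) : Set V :=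
  S ∪ {w | ∃ u ∈ S, ∃ v ∈ S, ∃ p : G.Walk u v, GPath G p ∧ w ∈ p.support}

/-- The `P₃`-interval of `S`: `S` together with the vertices having at least two
neighbours in `S`. -/
def P3Interval (G : SimpleGraph V) (S : Set V) : Set V :=
  S ∪ {w | w ∉ S ∧ ∃ a ∈ S, ∃ b ∈ S, a ≠ b ∧ G.Adj w a ∧ G.Adj w b}

/-- The convex hull of `S` in the triangle path convexity. -/
def THull (G : SimpleGraph V) (S : Set V) : Set V :=
  ⋂₀ {C : Set V | S ⊆ C ∧ TConvex G C}

/-- The convex hull of `S` in the monophonic convexity. -/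
def MHull (G : SimpleGraph V) (S : Set V) : Set V :=
  ⋂₀ {C : Set V | S ⊆ C ∧ MConvex G C}

/-- The convex hull of `S` in the geodetic convexity. -/
def GHull (G : SimpleGraph V) (S : Set V) : Set V :=
  ⋂₀ {C : Set V | S ⊆ C ∧ GConvex G C}

/-- `K` separates the vertices `a` and `b`: both lie outside `K` and every walk
between them meets `K`. -/
def Separates (G : SimpleGraph V) (K : Set V) (a b : V) : Prop :=
  a ∉ K ∧ b ∉ K ∧ ∀ p : G.Walk a b, ∃ w ∈ p.support, w ∈ K

/-- `K` is a separator of `G`. -/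
def IsSeparator (G : SimpleGraph V) (K : Set V) : Prop :=
  ∃ a b : V, Separates G K a b

/-- `G` is prime: it has no clique separator. -/
def IsPrime (G : SimpleGraph V) : Prop :=
  ¬ ∃ C : Set V, G.IsClique C ∧ IsSeparator G C

/-- `K` is a minimal separator for `a` and `b`. -/
def IsMinSeparator (G : SimpleGraph V) (K : Set V) (a b : V) : Prop :=
  Separates G K a b ∧ ∀ K' : Set V, K' ⊂ K → ¬ Separates G K' a b

/-- `W` induces a maximal prime subgraph of `G`. -/
def IsMPSubgraph (G : SimpleGraph V) (W : Set V) : Prop :=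
  IsPrime (G.induce W) ∧ ∀ W' : Set V, W ⊆ W' → IsPrime (G.induce W') → W' = W

/-- `C` is the vertex set of a connected component of `G - S`. -/
def IsCompOf (G : SimpleGraph V) (S C : Set V) : Prop :=
  C.Nonempty ∧ C ∩ S = ∅ ∧
  (∀ x ∈ C, ∀ y ∈ C, ∃ p : G.Walk x y, ∀ w ∈ p.support, w ∈ C) ∧
  (∀ x ∈ C, ∀ y : V, y ∉ S → G.Adj x y → y ∈ C)


section Helpers

variable {G : SimpleGraph V}

open SimpleGraph

lemma support_get_eq_getVert {u v : V} (p : G.Walk u v) (i : ℕ) (hi : i < p.support.length) :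
    p.support.get ⟨i, hi⟩ = p.getVert i := by
  induction p generalizing i with
  | nil =>
    simp only [Walk.support_nil, List.length_singleton] at hi
    obtain rfl : i = 0 := by omega
    rfl
  | cons h q ih =>
    cases i with
    | zero => rfl
    | succ n =>
      simp only [Walk.support_cons, List.length_cons] at hi
      simpa [Walk.getVert_cons_succ] using ih n (by omega)

/-- auxiliary reformulation of the adjacency condition of `MPath` via `getVert`. -/
def MGood (G : SimpleGraph V) {u v : V} (p : G.Walk u v) : Prop :=
  ∀ i j : ℕ, i + 1 < j → j ≤ p.length → ¬ G.Adj (p.getVert i) (p.getVert j)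

lemma mpath_iff {u v : V} (p : G.Walk u v) : MPath G p ↔ p.IsPath ∧ MGood G p := by
  have hls := p.length_support
  constructor
  · rintro ⟨hp, h⟩
    refine ⟨hp, fun i j hij hj => ?_⟩
    have hi : i < p.support.length := by omega
    have hj' : j < p.support.length := by omega
    have := h i j hij hi hj'
    rwa [support_get_eq_getVert, support_get_eq_getVert] at this
  · rintro ⟨hp, h⟩
    refine ⟨hp, fun i j hij hi hj => ?_⟩
    rw [support_get_eq_getVert, support_get_eq_getVert]
    exact h i j hij (by omega)

lemma mgood_nil {u : V} : MGood G (Walk.nil : G.Walk u u) := by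
  intro i j hij hj
  simp only [Walk.length_nil] at hj
  omega

lemma mgood_single {u v : V} (h : G.Adj u v) :
    MGood G (Walk.cons h Walk.nil) := by
  intro i j hij hj
  simp only [Walk.length_cons, Walk.length_nil] at hj
  omega

lemma mgood_cons_iff {x m y : V} (h : G.Adj x m) (r : G.Walk m y) :
    MGood G (Walk.cons h r) ↔
      MGood G r ∧ ∀ j : ℕ, 1 ≤ j → j ≤ r.length → ¬ G.Adj x (r.getVert j) := by
  constructor
  · intro H
    constructor
    · intro i j hij hj
      have := H (i + 1) (j + 1) (by omega) (by simp [Walk.length_cons]; omega)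
      simpa [Walk.getVert_cons_succ] using this
    · intro j h1 h2
      have := H 0 (j + 1) (by omega) (by simp [Walk.length_cons]; omega)
      simpa [Walk.getVert_cons_succ] using this
  · rintro ⟨H1, H2⟩ i j hij hj
    simp only [Walk.length_cons] at hj
    obtain ⟨j', rfl⟩ : ∃ j', j = j' + 1 := ⟨j - 1, by omega⟩
    cases i with
    | zero =>
      simpa [Walk.getVert_cons_succ] using H2 j' (by omega) (by omega)
    | succ i' =>
      simpa [Walk.getVert_cons_succ] using H1 i' j' (by omega) (by omega)

lemma extend_mpath {x y : V} {m : V} (r' : G.Walk m y) (hpath : r'.IsPath)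
    (hgood : MGood G r') (hw : ∃ w ∈ r'.support, x = w ∨ G.Adj x w) :
    ∃ r : G.Walk x y, r.IsPath ∧ MGood G r ∧ r.support ⊆ x :: r'.support := by
  induction r' with
  | nil =>
    simp only [Walk.support_nil, List.mem_singleton, exists_eq_left] at hw
    rcases hw with rfl | hadj
    · exact ⟨Walk.nil, Walk.IsPath.nil, mgood_nil, by simp⟩
    · refine ⟨Walk.cons hadj Walk.nil, ?_, mgood_single hadj, by simp⟩
      simp [Walk.cons_isPath_iff, hadj.ne]
  | cons h2 s ih =>
    rename_i m m2 _
    rw [Walk.cons_isPath_iff] at hpath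
    rw [mgood_cons_iff] at hgood
    by_cases hex : ∃ w ∈ s.support, x = w ∨ G.Adj x w
    · obtain ⟨r, h1, h2', h3⟩ := ih hpath.1 hgood.1 hex
      refine ⟨r, h1, h2', fun w hww => ?_⟩
      have := h3 hww
      simp only [List.mem_cons, Walk.support_cons] at this ⊢
      tauto
    · push_neg at hex
      simp only [Walk.support_cons, List.mem_cons] at hw
      obtain ⟨w, hw1, hw2⟩ := hw
      rcases hw1 with rfl | hws
      · -- w = m
        rcases hw2 with rfl | hadj
        · exact ⟨Walk.cons h2 s, (Walk.cons_isPath_iff _ _).2 hpath, (mgood_cons_iff _ _).2 hgood,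
            by intro z hz; simp only [Walk.support_cons, List.mem_cons] at hz ⊢; tauto⟩
        · refine ⟨Walk.cons hadj (Walk.cons h2 s), ?_, ?_, ?_⟩
          · rw [Walk.cons_isPath_iff]
            refine ⟨(Walk.cons_isPath_iff _ _).2 hpath, ?_⟩
            simp only [Walk.support_cons, List.mem_cons, not_or]
            refine ⟨hadj.ne, fun hxs => (hex x hxs).1 rfl⟩
          · rw [mgood_cons_iff]
            refine ⟨(mgood_cons_iff _ _).2 hgood, ?_⟩
            intro j h1j hjle
            obtain ⟨j', rfl⟩ : ∃ j', j = j' + 1 := ⟨j - 1, by omega⟩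
            rw [Walk.getVert_cons_succ]
            have hmem : s.getVert j' ∈ s.support :=
              Walk.mem_support_iff_exists_getVert.2 ⟨j', rfl, by
                simp only [Walk.length_cons] at hjle; omega⟩
            exact (hex _ hmem).2
          · intro z hz; simp only [Walk.support_cons, List.mem_cons] at hz ⊢; tauto
      · rcases hw2 with rfl | hadj2
        · exact absurd rfl (hex _ hws).1
        · exact absurd hadj2 (hex _ hws).2

lemma exists_mpath {x y : V} (q : G.Walk x y) :
    ∃ r : G.Walk x y, MPath G r ∧ r.support ⊆ q.support := by
  induction q with
  | nil => exact ⟨Walk.nil, (mpath_iff _).2 ⟨Walk.IsPath.nil, mgood_nil⟩, by simp⟩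
  | cons h q' ih =>
    obtain ⟨r', hr', hsub⟩ := ih
    rw [mpath_iff] at hr'
    obtain ⟨r, h1, h2, h3⟩ := extend_mpath r' hr'.1 hr'.2
      ⟨_, r'.start_mem_support, Or.inr h⟩
    refine ⟨r, (mpath_iff _).2 ⟨h1, h2⟩, fun w hww => ?_⟩
    have := h3 hww
    simp only [List.mem_cons, Walk.support_cons] at this ⊢
    rcases this with rfl | hmem
    · exact Or.inl rfl
    · exact Or.inr (hsub hmem)

lemma mpath_tpath {u v : V} {p : G.Walk u v} (h : MPath G p) : TPath G p :=
  ⟨h.1, fun i j hij hi hj => h.2 i j (by omega) hi hj⟩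

lemma subset_tHull (G : SimpleGraph V) (S : Set V) : S ⊆ THull G S :=
  fun x hx => Set.mem_sInter.2 fun _ hC => hC.1 hx

lemma tconvex_tHull (G : SimpleGraph V) (S : Set V) : TConvex G (THull G S) := by
  intro u v hu hv p hp w hw
  refine Set.mem_sInter.2 fun C hC => ?_
  exact hC.2 (Set.mem_sInter.1 hu C hC) (Set.mem_sInter.1 hv C hC) p hp w hw

lemma tHull_subset {S C : Set V} (h1 : S ⊆ C) (h2 : TConvex G C) : THull G S ⊆ C :=
  Set.sInter_subset_of_mem ⟨h1, h2⟩

lemma thull_nonadj (hprime : IsPrime G) {a b : V} (hne : a ≠ b) (hnadj : ¬ G.Adj a b) :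
    THull G {a, b} = Set.univ := by
  classical
  by_contra hH
  set H := THull G ({a, b} : Set V) with hHdef
  obtain ⟨v, hv⟩ := Set.ne_univ_iff_exists_notMem _ |>.1 hH
  set C : Set V := {x | ∃ p : G.Walk v x, ∀ w ∈ p.support, w ∉ H} with hCdef
  have hvC : v ∈ C := ⟨Walk.nil, by simpa using hv⟩
  have hCH : ∀ x ∈ C, x ∉ H := fun x hx => by
    obtain ⟨p, hp⟩ := hx
    exact hp x p.end_mem_support
  have hclose : ∀ x ∈ C, ∀ y, y ∉ H → G.Adj x y → y ∈ C := by
    rintro x ⟨p, hp⟩ y hy hadj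
    refine ⟨p.concat hadj, fun w hww => ?_⟩
    rw [Walk.support_concat, List.mem_append] at hww
    rcases hww with hww | hww
    · exact hp w hww
    · rw [List.mem_singleton] at hww
      subst hww
      exact hy
  set K : Set V := {x | x ∉ C ∧ ∃ c ∈ C, G.Adj x c} with hKdef
  have hKH : ∀ x ∈ K, x ∈ H := by
    rintro x ⟨hxC, c, hc, hadj⟩
    by_contra hxH
    exact hxC (hclose c hc x hxH hadj.symm)
  have haH : a ∈ H := subset_tHull G _ (by simp)
  have hbH : b ∈ H := subset_tHull G _ (by simp)
  have hclique : G.IsClique K := by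
    rintro x ⟨hxC, cx, hcx, hax⟩ y ⟨hyC, cy, hcy, hay⟩ hxy
    by_contra hnadjxy
    obtain ⟨px, hpx⟩ := id hcx
    obtain ⟨py, hpy⟩ := id hcy
    set q : G.Walk x y := Walk.cons hax ((px.reverse.append py).concat hay.symm) with hqdef
    have hq : ∀ w ∈ q.support, w = x ∨ w = y ∨ w ∉ H := by
      intro w hww
      simp only [hqdef, Walk.support_cons, Walk.support_concat, Walk.support_append,
        Walk.support_reverse, List.concat_eq_append, List.mem_cons, List.mem_append,
        List.mem_reverse, List.mem_singleton] at hww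
      rcases hww with rfl | (hww | hww) | rfl | h0
      · exact Or.inl rfl
      · exact Or.inr (Or.inr (hpx w hww))
      · exact Or.inr (Or.inr (hpy w (List.mem_of_mem_tail hww)))
      · exact Or.inr (Or.inl rfl)
      · simp at h0
    obtain ⟨r, hr, hrsub⟩ := exists_mpath q
    have hrH : ∀ w ∈ r.support, w ∈ H :=
      tconvex_tHull G _ (hKH x ⟨hxC, cx, hcx, hax⟩) (hKH y ⟨hyC, cy, hcy, hay⟩)
        r (mpath_tpath hr) 
    cases r with
    | nil => exact hxy rfl
    | cons h1 r1 =>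
      rename_i mm
      have hmsup : mm ∈ (Walk.cons h1 r1).support := by simp
      rcases hq mm (hrsub hmsup) with rfl | rfl | hmH
      · exact G.irrefl h1
      · exact hnadjxy h1
      · exact hmH (hrH mm hmsup)
  obtain ⟨h, hhH, hhK⟩ : ∃ h, h ∈ H ∧ h ∉ K := by
    by_cases haK : a ∈ K
    · exact ⟨b, hbH, fun hbK => hnadj (hclique haK hbK hne)⟩
    · exact ⟨a, haH, haK⟩
  have hhC : h ∉ C := fun hc => hCH h hc hhH
  have key : ∀ {s t : V} (p : G.Walk s t), s ∈ C → t ∉ C → ∃ w ∈ p.support, w ∈ K := by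
    intro s t p
    induction p with
    | nil => exact fun hs ht => absurd hs ht
    | cons hadj p' ih =>
      rename_i s' m' t'
      intro hs ht
      by_cases hm : m' ∈ C
      · obtain ⟨w, hw1, hw2⟩ := ih hm ht
        exact ⟨w, by simp [hw1], hw2⟩
      · exact ⟨m', by simp, hm, s', hs, hadj.symm⟩
  exact hprime ⟨K, hclique, v, h, fun hvK => hvK.1 hvC, hhK, fun p => key p hvC hhC⟩

end Helpers

lemma thull_complete (G : SimpleGraph V) (hcomp : ∀ x y : V, x ≠ y → G.Adj x y)
    {a b : V} (hne : a ≠ b) : THull G {a, b} = Set.univ := by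
  ext w
  simp only [Set.mem_univ, iff_true]
  by_cases hwa : w = a
  · exact subset_tHull G _ (by simp [hwa])
  by_cases hwb : w = b
  · exact subset_tHull G _ (by simp [hwb])
  set p : G.Walk a b :=
    SimpleGraph.Walk.cons (hcomp a w (Ne.symm hwa))
      (SimpleGraph.Walk.cons (hcomp w b hwb) SimpleGraph.Walk.nil) with hpdef
  have hsupp : p.support = [a, w, b] := by simp [hpdef]
  have hp : TPath G p := by
    constructor
    · rw [SimpleGraph.Walk.isPath_def, hsupp]
      simp [hwa, hwb, hne, Ne.symm hwa]
    · intro i j hij hi hj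
      rw [hsupp] at hj
      simp only [List.length_cons, List.length_nil] at hj
      omega
  exact tconvex_tHull G _ (subset_tHull G _ (by simp)) (subset_tHull G _ (by simp))
    p hp w (by rw [hsupp]; simp)

lemma tconvex_singleton (G : SimpleGraph V) (c : V) : TConvex G {c} := by
  intro u v hu hv p hp w hw
  simp only [Set.mem_singleton_iff] at hu hv
  subst hu; subst hv
  rw [(SimpleGraph.Walk.isPath_iff_eq_nil (p := p)).1 hp.1] at hw
  simpa using hw

theorem stmt_12 [Fintype V] (G : SimpleGraph V) (hconn : G.Connected)
    (hprime : IsPrime G) (hcard : 2 ≤ Fintype.card V) :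
    IsLeast {n : ℕ | ∃ S : Set V, S.ncard = n ∧ THull G S = Set.univ} 2 := by
  classical
  obtain ⟨a, b, hab⟩ := Fintype.exists_pair_of_one_lt_card (α := V) (by omega)
  constructor
  · -- membership: some 2-element set has full hull
    by_cases hcomp : ∀ x y : V, x ≠ y → G.Adj x y
    · exact ⟨{a, b}, Set.ncard_pair hab, thull_complete G hcomp hab⟩
    · push_neg at hcomp
      obtain ⟨x, y, hxy, hnadj⟩ := hcomp
      exact ⟨{x, y}, Set.ncard_pair hxy, thull_nonadj hprime hxy hnadj⟩
  · -- lower bound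
    rintro n ⟨S, hSn, hHull⟩
    by_contra hlt
    push_neg at hlt
    interval_cases n
    · -- n = 0 : S = ∅
      have hS : S = ∅ := (Set.ncard_eq_zero S.toFinite).1 hSn
      subst hS
      have : THull G (∅ : Set V) ⊆ ∅ :=
        tHull_subset (by simp) (fun u v hu => absurd hu (Set.notMem_empty u))
      rw [hHull] at this
      exact this (Set.mem_univ a)
    · -- n = 1 : S = {c}
      obtain ⟨c, hc⟩ := (Set.ncard_eq_one).1 hSn
      subst hc
      have : THull G ({c} : Set V) ⊆ {c} :=
        tHull_subset subset_rfl (tconvex_singleton G c)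
      rw [hHull] at this
      have ha := this (Set.mem_univ a)
      have hb := this (Set.mem_univ b)
      simp only [Set.mem_singleton_iff] at ha hb
      exact hab (ha.trans hb.symm)
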